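/- Let A be an n-by-n nonsingular Hermitian matrix and let (λ, x) be an eigenpair of A. Then for any nonzero subspace 𝒦 of ℂ^n, sin∠(x, A𝒦) ≤ |λ_max/λ| · sin∠(x, 𝒦), where A𝒦 = {Ay : y ∈ 𝒦} and λ_max is the largest magnitude eigenvalue of A. -/

import Mathlib

open Matrix

noncomputable def hnorm {n : ℕ} (x : Fin n → ℂ) : ℝ :=
  Real.sqrt ((star x ⬝ᵥ x).re)

noncomputable def cosAngle {n : ℕ} (x y : Fin n → ℂ) : ℝ :=
  ‖star x ⬝ᵥ y‖ / (hnorm x * hnorm y)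

noncomputable def sinAngle {n : ℕ} (x y : Fin n → ℂ) : ℝ :=
  Real.sqrt (1 - cosAngle x y ^ 2)

noncomputable def sinAngleSub {n : ℕ} (x : Fin n → ℂ) (K : Submodule ℂ (Fin n → ℂ)) : ℝ :=
  sInf {s : ℝ | ∃ y ∈ K, y ≠ 0 ∧ s = sinAngle x y}

noncomputable def sinAngleSubSub {n : ℕ} (X K : Submodule ℂ (Fin n → ℂ)) : ℝ :=
  sInf {s : ℝ | ∃ x ∈ X, x ≠ 0 ∧ ∃ y ∈ K, y ≠ 0 ∧ s = sinAngle x y}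

def Eigenpair {n : ℕ} (A : Matrix (Fin n) (Fin n) ℂ) (μ : ℂ) (v : Fin n → ℂ) : Prop :=
  v ≠ 0 ∧ A *ᵥ v = μ • v

noncomputable def specNorm {n : ℕ} (M : Matrix (Fin n) (Fin n) ℂ) : ℝ :=
  sSup {r : ℝ | ∃ v : Fin n → ℂ, hnorm v = 1 ∧ r = hnorm (M *ᵥ v)}

noncomputable def frobNorm {m p : ℕ} (M : Matrix (Fin m) (Fin p) ℂ) : ℝ :=
  Real.sqrt (∑ i, ∑ j, ‖M i j‖ ^ 2)

noncomputable def specCond {n : ℕ} (M : Matrix (Fin n) (Fin n) ℂ) : ℝ :=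
  sSup {r : ℝ | ∃ μ ∈ spectrum ℂ M, r = ‖μ‖} /
    sInf {r : ℝ | ∃ μ ∈ spectrum ℂ M, r = ‖μ‖}

def RitzPair {n : ℕ} (A : Matrix (Fin n) (Fin n) ℂ) (K : Submodule ℂ (Fin n → ℂ))
    (μ : ℂ) (u : Fin n → ℂ) : Prop :=
  u ∈ K ∧ u ≠ 0 ∧ ∀ y ∈ K, star y ⬝ᵥ (A *ᵥ u - μ • u) = 0

def HarmonicRitzPair {n : ℕ} (A : Matrix (Fin n) (Fin n) ℂ) (σ : ℂ)
    (K : Submodule ℂ (Fin n → ℂ)) (θ : ℂ) (v : Fin n → ℂ) : Prop :=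
  v ∈ K ∧ v ≠ 0 ∧ ∀ y ∈ K, star ((A - σ • 1) *ᵥ y) ⬝ᵥ (A *ᵥ v - θ • v) = 0

def THarmonicRitzPair {n : ℕ} (A T : Matrix (Fin n) (Fin n) ℂ) (σ : ℂ)
    (K : Submodule ℂ (Fin n → ℂ)) (θ : ℂ) (v : Fin n → ℂ) : Prop :=
  v ∈ K ∧ v ≠ 0 ∧ ∀ y ∈ K, star ((A - σ • 1) *ᵥ y) ⬝ᵥ (T *ᵥ (A *ᵥ v - θ • v)) = 0

def IsOrthProjOn {n : ℕ} (P : Matrix (Fin n) (Fin n) ℂ)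
    (Q : Submodule ℂ (Fin n → ℂ)) : Prop :=
  P.IsHermitian ∧ P * P = P ∧ (∀ v, P *ᵥ v ∈ Q) ∧ (∀ v ∈ Q, P *ᵥ v = v)


section Aux

lemma hnorm_eq' {n : ℕ} (x : Fin n → ℂ) :
    hnorm x = ‖(WithLp.equiv 2 (Fin n → ℂ)).symm x‖ := by
  rw [hnorm, EuclideanSpace.norm_eq]
  congr 1
  rw [dotProduct, Complex.re_sum]
  refine Finset.sum_congr rfl fun i _ => ?_
  simp [Complex.conj_mul', ← Complex.ofReal_pow]

lemma hnorm_eq_sum' {n : ℕ} (x : Fin n → ℂ) :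
    hnorm x = Real.sqrt (∑ i, ‖x i‖ ^ 2) := by
  rw [hnorm]
  congr 1
  rw [dotProduct, Complex.re_sum]
  refine Finset.sum_congr rfl fun i _ => ?_
  simp [Complex.conj_mul', ← Complex.ofReal_pow]

lemma inner_eq' {n : ℕ} (x y : Fin n → ℂ) :
    (inner ℂ ((WithLp.equiv 2 (Fin n → ℂ)).symm x) ((WithLp.equiv 2 (Fin n → ℂ)).symm y) : ℂ)
      = star x ⬝ᵥ y := by rw [dotProduct_comm]; rfl

lemma hnorm_pos' {n : ℕ} {x : Fin n → ℂ} (hx : x ≠ 0) : 0 < hnorm x := by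
  rw [hnorm_eq', norm_pos_iff]
  simpa using hx

lemma hnorm_nonneg' {n : ℕ} (x : Fin n → ℂ) : 0 ≤ hnorm x := Real.sqrt_nonneg _

lemma pythagoras' {n : ℕ} (x z : Fin n → ℂ) (a : ℂ) (ho : star x ⬝ᵥ z = 0) :
    hnorm (a • x + z) ^ 2 = ‖a‖ ^ 2 * hnorm x ^ 2 + hnorm z ^ 2 := by
  simp only [hnorm_eq']
  have hxz : (inner ℂ ((WithLp.equiv 2 (Fin n → ℂ)).symm (a • x))
      ((WithLp.equiv 2 (Fin n → ℂ)).symm z) : ℂ) = 0 := by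
    have h0 : (WithLp.equiv 2 (Fin n → ℂ)).symm (a • x)
        = a • (WithLp.equiv 2 (Fin n → ℂ)).symm x := rfl
    rw [h0, inner_smul_left, inner_eq', ho, mul_zero]
  have h : (WithLp.equiv 2 (Fin n → ℂ)).symm (a • x + z)
      = (WithLp.equiv 2 (Fin n → ℂ)).symm (a • x) + (WithLp.equiv 2 (Fin n → ℂ)).symm z := rfl
  rw [h, norm_add_sq (𝕜 := ℂ), hxz]
  have h0 : (WithLp.equiv 2 (Fin n → ℂ)).symm (a • x)
      = a • (WithLp.equiv 2 (Fin n → ℂ)).symm x := rfl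
  simp [h0, norm_smul, mul_pow, mul_comm]
  try ring

lemma dot_smul_right' {n : ℕ} (x v : Fin n → ℂ) (a : ℂ) :
    star x ⬝ᵥ (a • v) = a * (star x ⬝ᵥ v) := by
  simp [dotProduct, Finset.mul_sum]
  exact Finset.sum_congr rfl fun i _ => by ring

lemma dot_self_ne_zero' {n : ℕ} {x : Fin n → ℂ} (hx : x ≠ 0) : star x ⬝ᵥ x ≠ 0 := by
  intro h
  have h2 : (star x ⬝ᵥ x).re = 0 := by rw [h]; rfl
  rw [dotProduct, Complex.re_sum] at h2
  obtain ⟨i, hi⟩ := Function.ne_iff.mp hx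
  have hre : ∀ j, (star x j * x j).re = ‖x j‖ ^ 2 := fun j => by
    simp only [Pi.star_apply, Complex.star_def]
    simp [Complex.conj_mul', ← Complex.ofReal_pow]
  rw [Finset.sum_congr rfl (fun j _ => hre j)] at h2
  have hpos : 0 < ‖x i‖ ^ 2 := pow_pos (norm_pos_iff.mpr hi) 2
  have hle : ‖x i‖ ^ 2 ≤ ∑ j, ‖x j‖ ^ 2 :=
    Finset.single_le_sum (f := fun j => ‖x j‖ ^ 2) (fun j _ => by positivity)
      (Finset.mem_univ i)
  linarith

lemma sinAngle_eq_of_decomp' {n : ℕ} (x y z : Fin n → ℂ) (a : ℂ)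
    (hx : x ≠ 0) (hy : y ≠ 0) (hyz : y = a • x + z) (ho : star x ⬝ᵥ z = 0) :
    sinAngle x y = hnorm z / hnorm y := by
  have hxp := hnorm_pos' hx
  have hyp := hnorm_pos' hy
  have hip : star x ⬝ᵥ y = a * ((hnorm x : ℂ)) ^ 2 := by
    rw [hyz, dotProduct_add, ho, add_zero]
    have h1 : star x ⬝ᵥ (a • x) = a * (star x ⬝ᵥ x) := dot_smul_right' x x a
    have h2 : (star x ⬝ᵥ x) = ((hnorm x : ℝ) : ℂ) ^ 2 := by
      rw [← inner_eq', inner_self_eq_norm_sq_to_K, ← hnorm_eq']; rfl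
    rw [h1, h2]
  have habs : ‖star x ⬝ᵥ y‖ = ‖a‖ * hnorm x ^ 2 := by
    rw [hip]
    simp [map_pow, abs_of_nonneg (hnorm_nonneg' x)]
  have hy2 : hnorm y ^ 2 = ‖a‖ ^ 2 * hnorm x ^ 2 + hnorm z ^ 2 := by
    rw [hyz]; exact pythagoras' x z a ho
  have hcos : cosAngle x y = ‖a‖ * hnorm x / hnorm y := by
    rw [cosAngle, habs]; field_simp
  rw [sinAngle, hcos]
  have h1 : 1 - (‖a‖ * hnorm x / hnorm y) ^ 2 = (hnorm z / hnorm y) ^ 2 := by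
    field_simp
    nlinarith [hy2]
  rw [h1, Real.sqrt_sq (div_nonneg (hnorm_nonneg' z) (le_of_lt hyp))]

lemma hnorm_mulVec_unitary' {n : ℕ} (U : Matrix (Fin n) (Fin n) ℂ)
    (hU : U ∈ Matrix.unitaryGroup (Fin n) ℂ) (w : Fin n → ℂ) :
    hnorm (U *ᵥ w) = hnorm w := by
  rw [hnorm, hnorm]
  congr 2
  rw [star_mulVec, dotProduct_mulVec, vecMul_vecMul, ← star_eq_conjTranspose,
    (Unitary.mem_iff.mp hU).1, vecMul_one]

lemma hnorm_diag_le' {n : ℕ} (d : Fin n → ℂ) (M : ℝ) (hM : 0 ≤ M)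
    (hd : ∀ i, ‖d i‖ ≤ M) (w : Fin n → ℂ) :
    hnorm (diagonal d *ᵥ w) ≤ M * hnorm w := by
  rw [hnorm_eq_sum', hnorm_eq_sum']
  have h1 : ∀ i, ‖(diagonal d *ᵥ w) i‖ ^ 2 ≤ M ^ 2 * ‖w i‖ ^ 2 := by
    intro i
    rw [mulVec_diagonal, norm_mul, mul_pow]
    gcongr
    exact hd i
  calc Real.sqrt (∑ i, ‖(diagonal d *ᵥ w) i‖ ^ 2)
      ≤ Real.sqrt (∑ i, M ^ 2 * ‖w i‖ ^ 2) := by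
        apply Real.sqrt_le_sqrt
        exact Finset.sum_le_sum fun i _ => h1 i
    _ = M * Real.sqrt (∑ i, ‖w i‖ ^ 2) := by
        rw [← Finset.mul_sum, Real.sqrt_mul (by positivity), Real.sqrt_sq hM]

lemma hnorm_mulVec_le' {n : ℕ} {A : Matrix (Fin n) (Fin n) ℂ} (hA : A.IsHermitian)
    {M : ℝ} (hM : 0 ≤ M) (hbnd : ∀ i, |hA.eigenvalues i| ≤ M) (z : Fin n → ℂ) :
    hnorm (A *ᵥ z) ≤ M * hnorm z := by
  set U := (hA.eigenvectorUnitary : Matrix (Fin n) (Fin n) ℂ) with hUdef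
  have hspec := hA.spectral_theorem
  have h1 : A *ᵥ z = U *ᵥ ((diagonal (RCLike.ofReal ∘ hA.eigenvalues)) *ᵥ (star U *ᵥ z)) := by
    rw [mulVec_mulVec, mulVec_mulVec]; exact congrArg (· *ᵥ z) hspec
  rw [h1, hnorm_mulVec_unitary' U hA.eigenvectorUnitary.2]
  have h2 := hnorm_diag_le' (RCLike.ofReal ∘ hA.eigenvalues) M hM
    (fun i => by simpa using hbnd i) (star U *ᵥ z)
  refine h2.trans ?_
  gcongr
  rw [hnorm_mulVec_unitary' (star U) (Unitary.star_mem hA.eigenvectorUnitary.2)]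

lemma key_step' {n : ℕ} {A : Matrix (Fin n) (Fin n) ℂ} (hA : A.IsHermitian)
    {l : ℂ} {x : Fin n → ℂ} (hx0 : x ≠ 0) (hlx : A *ᵥ x = l • x) (hl : l ≠ 0)
    {M : ℝ} (hlM : ‖l‖ ≤ M)
    (hB : ∀ z, hnorm (A *ᵥ z) ≤ M * hnorm z)
    {y : Fin n → ℂ} (hy : y ≠ 0) (hAy : A *ᵥ y ≠ 0) :
    sinAngle x (A *ᵥ y) ≤ (M / ‖l‖) * sinAngle x y := by
  set a : ℂ := (star x ⬝ᵥ y) / (star x ⬝ᵥ x) with ha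
  set z : Fin n → ℂ := y - a • x with hz
  have hxx := dot_self_ne_zero' hx0
  have ho : star x ⬝ᵥ z = 0 := by
    rw [hz, dotProduct_sub, dot_smul_right', ha, div_mul_cancel₀ _ hxx, sub_self]
  have hdecomp : y = a • x + z := by rw [hz]; abel
  have hAz_o : star x ⬝ᵥ (A *ᵥ z) = 0 := by
    rw [dotProduct_mulVec]
    have h1 : star x ᵥ* A = star (A *ᵥ x) := by
      rw [star_mulVec, hA]
    rw [h1, hlx, star_smul, smul_dotProduct, ho, smul_zero]
  have hdecompA : A *ᵥ y = (a * l) • x + A *ᵥ z := by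
    conv_lhs => rw [hdecomp]
    rw [mulVec_add, mulVec_smul, hlx, smul_smul]
  have s1 : sinAngle x y = hnorm z / hnorm y :=
    sinAngle_eq_of_decomp' x y z a hx0 hy hdecomp ho
  have s2 : sinAngle x (A *ᵥ y) = hnorm (A *ᵥ z) / hnorm (A *ᵥ y) :=
    sinAngle_eq_of_decomp' x (A *ᵥ y) (A *ᵥ z) (a * l) hx0 hAy hdecompA hAz_o
  rw [s1, s2]
  set lam := ‖l‖ with hlam
  have hlamp : 0 < lam := by
    rw [hlam]; exact norm_pos_iff.mpr hl
  have hMp : 0 < M := lt_of_lt_of_le hlamp hlM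
  set p : ℝ := ‖a‖ ^ 2 * hnorm x ^ 2 with hp
  have hpn : 0 ≤ p := by positivity
  have hy2 : hnorm y ^ 2 = p + hnorm z ^ 2 := by
    conv_lhs => rw [hdecomp]
    rw [pythagoras' x z a ho]
  have hAy2 : hnorm (A *ᵥ y) ^ 2 = lam ^ 2 * p + hnorm (A *ᵥ z) ^ 2 := by
    conv_lhs => rw [hdecompA]
    rw [pythagoras' x (A *ᵥ z) (a * l) hAz_o, norm_mul]
    rw [hp]; ring
  have hyp := hnorm_pos' hy
  have hAyp := hnorm_pos' hAy
  have htn := hnorm_nonneg' (A *ᵥ z)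
  have hsn := hnorm_nonneg' z
  have ht := hB z
  rw [div_mul_div_comm, div_le_div_iff₀ hAyp (by positivity)]
  have hAz2 : hnorm (A *ᵥ z) ^ 2 ≤ M ^ 2 * hnorm z ^ 2 := by nlinarith
  have hlam2 : lam ^ 2 ≤ M ^ 2 := by nlinarith
  have e1 : (hnorm (A *ᵥ z) * (lam * hnorm y)) ^ 2
      = hnorm (A *ᵥ z) ^ 2 * lam ^ 2 * p + hnorm (A *ᵥ z) ^ 2 * lam ^ 2 * hnorm z ^ 2 := by
    rw [mul_pow, mul_pow, hy2]; ring
  have e2 : (M * hnorm z * hnorm (A *ᵥ y)) ^ 2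
      = M ^ 2 * hnorm z ^ 2 * (lam ^ 2 * p) + M ^ 2 * hnorm z ^ 2 * hnorm (A *ᵥ z) ^ 2 := by
    rw [mul_pow, mul_pow, hAy2]; ring
  have h₁ : 0 ≤ lam ^ 2 * p * (M ^ 2 * hnorm z ^ 2 - hnorm (A *ᵥ z) ^ 2) :=
    mul_nonneg (mul_nonneg (sq_nonneg lam) hpn) (by linarith)
  have h₂ : 0 ≤ hnorm (A *ᵥ z) ^ 2 * hnorm z ^ 2 * (M ^ 2 - lam ^ 2) :=
    mul_nonneg (mul_nonneg (sq_nonneg _) (sq_nonneg _)) (by linarith)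
  have hsq : (hnorm (A *ᵥ z) * (lam * hnorm y)) ^ 2
      ≤ (M * hnorm z * hnorm (A *ᵥ y)) ^ 2 := by
    rw [e1, e2]; nlinarith
  have hfin := Real.sqrt_le_sqrt hsq
  rwa [Real.sqrt_sq (by positivity), Real.sqrt_sq (by positivity)] at hfin

end Aux

/-- Corollary 2.2 (sine bound between an eigenvector and the image subspace A𝒦). -/
theorem stmt1_sin_subspace_bound
    {n : ℕ} (A : Matrix (Fin n) (Fin n) ℂ) (hA : A.IsHermitian) (hdet : IsUnit A.det)
    (l : ℂ) (x : Fin n → ℂ) (hx : Eigenpair A l x)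
    (lmax : ℂ) (xmax : Fin n → ℂ) (hmax : Eigenpair A lmax xmax)
    (hmaxGe : ∀ μ v, Eigenpair A μ v → ‖μ‖ ≤ ‖lmax‖)
    (K : Submodule ℂ (Fin n → ℂ)) (hK : K ≠ ⊥) :
    sinAngleSub x (K.map (Matrix.mulVecLin A)) ≤
      ‖lmax / l‖ * sinAngleSub x K := by
  obtain ⟨hx0, hlx⟩ := hx
  have hInj : Function.Injective (A.mulVec) :=
    mulVec_injective_iff_isUnit.2 (A.isUnit_iff_isUnit_det.2 hdet)
  have hl : l ≠ 0 := by
    intro h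
    apply hx0
    apply hInj
    rw [hlx, h, zero_smul, mulVec_zero]
  have hlM : ‖l‖ ≤ ‖lmax‖ := hmaxGe l x ⟨hx0, hlx⟩
  have hM0 : (0:ℝ) ≤ ‖lmax‖ := norm_nonneg _
  have hlp : 0 < ‖l‖ := norm_pos_iff.mpr hl
  have hbnd : ∀ i, |hA.eigenvalues i| ≤ ‖lmax‖ := by
    intro i
    have hb0 : (⇑(hA.eigenvectorBasis i) : Fin n → ℂ) ≠ 0 := by
      intro h
      exact hA.eigenvectorBasis.orthonormal.ne_zero i (by ext j; exact congrFun h j)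
    have hpair : Eigenpair A ((hA.eigenvalues i : ℂ)) ⇑(hA.eigenvectorBasis i) := by
      refine ⟨hb0, ?_⟩
      rw [hA.mulVec_eigenvectorBasis i]
      ext j
      simp [Complex.real_smul]
    have := hmaxGe _ _ hpair
    simpa using this
  have hB : ∀ z, hnorm (A *ᵥ z) ≤ ‖lmax‖ * hnorm z :=
    hnorm_mulVec_le' hA hM0 hbnd
  have hc : ‖lmax / l‖ = ‖lmax‖ / ‖l‖ :=
    norm_div lmax l
  rw [hc]
  set c := ‖lmax‖ / ‖l‖ with hcdef
  have hcpos : 0 < c := div_pos (lt_of_lt_of_le hlp hlM) hlp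
  set S := {s : ℝ | ∃ y ∈ K.map (Matrix.mulVecLin A), y ≠ 0 ∧ s = sinAngle x y} with hS
  set T := {s : ℝ | ∃ y ∈ K, y ≠ 0 ∧ s = sinAngle x y} with hT
  have hSbdd : BddBelow S := by
    refine ⟨0, fun s hs => ?_⟩
    obtain ⟨y, _, _, rfl⟩ := hs
    exact Real.sqrt_nonneg _
  obtain ⟨y0, hy0K, hy00⟩ := Submodule.exists_mem_ne_zero_of_ne_bot hK
  have hTne : T.Nonempty := ⟨sinAngle x y0, y0, hy0K, hy00, rfl⟩
  have hstep : ∀ s ∈ T, sInf S ≤ c * s := by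
    rintro s ⟨y, hyK, hy0, rfl⟩
    have hAy0 : A *ᵥ y ≠ 0 := by
      intro h
      apply hy0
      apply hInj
      rw [h, mulVec_zero]
    have hmem : sinAngle x (A *ᵥ y) ∈ S := by
      refine ⟨A *ᵥ y, ?_, hAy0, rfl⟩
      exact Submodule.mem_map.mpr ⟨y, hyK, rfl⟩
    exact le_trans (csInf_le hSbdd hmem) (key_step' hA hx0 hlx hl hlM hB hy0 hAy0)
  have h1 : sInf S / c ≤ sInf T := by
    refine le_csInf hTne fun s hs => ?_
    rw [div_le_iff₀ hcpos]
    rw [mul_comm]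
    exact hstep s hs
  have h2 : sInf S ≤ sInf T * c := (div_le_iff₀ hcpos).1 h1
  show sInf S ≤ c * sInf T
  rw [mul_comm]
  exact h2
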